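/- Let M : α ↦ M_α be a matroid flock on E, let α ∈ ℤ^E, and let J ⊆ E. If M_α = M_{α+e_J}, then λ_{M_α}(J) = 0, where λ_N(J) := r_N(J) + r_N(E \ J) − r_N(E) is the connectivity function of the matroid N. -/

import Mathlib

open Matroid Set

namespace FrobFlock

variable {E : Type*}

/-- The local rank function of a matroid: the size of a largest independent subset of `X`. -/
noncomputable def rk (M : Matroid E) (X : Set E) : ℕ :=
  sSup {n | ∃ I, I ⊆ X ∧ M.Indep I ∧ I.ncard = n}

/-- Deletion of the set `D` from the matroid `M`. -/
def mdel (M : Matroid E) (D : Set E) : Matroid E := M ↾ (M.E \ D)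

/-- Contraction of the set `C` in the matroid `M` (defined by duality). -/
def mcon (M : Matroid E) (C : Set E) : Matroid E := (mdel M✶ C)✶

/-- The 0/1 indicator vector of a set `I ⊆ E`. -/
noncomputable def eVec (I : Set E) : E → ℤ := I.indicator 1

/-- `M : ℤ^E → Matroid E` is a matroid flock of rank `d` on `E`:
each `M α` is a matroid on ground set `E` of rank `d`, satisfying (MF1) and (MF2). -/
def IsMatroidFlock [Fintype E] (d : ℕ) (M : (E → ℤ) → Matroid E) : Prop :=
  (∀ α, (M α).E = Set.univ) ∧
  (∀ α, rk (M α) Set.univ = d) ∧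
  (∀ α (i : E), mcon (M α) {i} = mdel (M (α + eVec {i})) {i}) ∧
  (∀ α, M α = M (α + 1))

/-- A matroid valuation `ν : binom(E,d) → ℤ ∪ {∞}`, encoded as a function on all finsets
which takes the value `⊤` outside `binom(E,d)`. -/
def IsValuation [DecidableEq E] (d : ℕ) (ν : Finset E → WithTop ℤ) : Prop :=
  (∀ B : Finset E, B.card ≠ d → ν B = ⊤) ∧
  (∃ B : Finset E, B.card = d ∧ ν B ≠ ⊤) ∧
  (∀ B B' : Finset E, B.card = d → B'.card = d → ∀ i ∈ B \ B', ∃ j ∈ B' \ B,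
      ν (insert j (B.erase i)) + ν (insert i (B'.erase j)) ≤ ν B + ν B')

/-- `B ∈ B^ν_α`: the set `B` attains the supremum `g^ν(α)`, i.e. `B` is a basis of `M^ν_α`. -/
def OptBasis (d : ℕ) (ν : Finset E → WithTop ℤ) (α : E → ℤ) (B : Finset E) : Prop :=
  B.card = d ∧ ν B ≠ ⊤ ∧ ∀ B' : Finset E, B'.card = d →
    ((∑ i ∈ B', α i : ℤ) : WithTop ℤ) + ν B ≤ ((∑ i ∈ B, α i : ℤ) : WithTop ℤ) + ν B'


/-! ### Auxiliary lemmas -/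

section Aux

variable {N : Matroid E} {C D I X B : Set E}

lemma mdel_ground (N : Matroid E) (D : Set E) : (mdel N D).E = N.E \ D := rfl

lemma mcon_ground (N : Matroid E) (C : Set E) : (mcon N C).E = N.E \ C := rfl

lemma mdel_indep_iff : (mdel N D).Indep I ↔ N.Indep I ∧ I ⊆ N.E \ D :=
  restrict_indep_iff

lemma mdel_empty (N : Matroid E) : mdel N ∅ = N := by
  rw [mdel, diff_empty, restrict_ground_eq_self]

lemma mcon_empty (N : Matroid E) : mcon N ∅ = N := by
  rw [mcon, mdel_empty, dual_dual]

lemma mdel_mdel (N : Matroid E) (D₁ D₂ : Set E) :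
    mdel (mdel N D₁) D₂ = mdel N (D₁ ∪ D₂) := by
  show (N ↾ (N.E \ D₁)) ↾ ((N ↾ (N.E \ D₁)).E \ D₂) = N ↾ (N.E \ (D₁ ∪ D₂))
  rw [restrict_ground_eq, restrict_restrict_eq _ diff_subset, diff_diff]

lemma mcon_mcon (N : Matroid E) (C₁ C₂ : Set E) :
    mcon (mcon N C₁) C₂ = mcon N (C₁ ∪ C₂) := by
  show (mdel ((mdel N✶ C₁)✶)✶ C₂)✶ = (mdel N✶ (C₁ ∪ C₂))✶
  rw [dual_dual, mdel_mdel]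

/-- Independence in the contraction `mcon N C`, in terms of bases of `C`. -/
lemma mcon_indep_iff (hC : C ⊆ N.E) :
    (mcon N C).Indep I ↔ I ⊆ N.E \ C ∧ ∃ J, N.IsBasis J C ∧ N.Indep (I ∪ J) := by
  have hR : N.E \ C ⊆ N✶.E := by rw [dual_ground]; exact diff_subset
  have hgr : (mdel N✶ C) = N✶ ↾ (N.E \ C) := by rw [mdel, dual_ground]
  constructor
  · intro hI
    obtain ⟨hIR, B, hB, hdisj⟩ := (dual_indep_iff_exists').1 hI
    rw [hgr, restrict_ground_eq] at hIR
    rw [hgr, isBase_restrict_iff hR] at hB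
    obtain ⟨B', hB', hBeq⟩ := hB.exists_isBase
    have hbasis : N✶.IsBasis (B' ∩ (N.E \ C)) (N.E \ C) := hBeq ▸ hB
    have hkey := hB'.compl_inter_isBasis_of_inter_isBasis hbasis
    rw [dual_dual, dual_ground, diff_diff_cancel_left hC] at hkey
    refine ⟨hIR, (N.E \ B') ∩ C, hkey, ?_⟩
    have hbase : N.IsBase (N.E \ B') := hB'.compl_isBase_of_dual
    refine hbase.indep.subset (union_subset (fun x hx => ?_) inter_subset_left)
    refine ⟨(hIR hx).1, fun hxB' => ?_⟩
    exact (disjoint_left.1 hdisj hx) (hBeq ▸ ⟨hxB', hIR hx⟩)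
  · rintro ⟨hIR, J, hJ, hIJ⟩
    obtain ⟨B₀, hB₀, hsub⟩ := hIJ.exists_isBase_superset
    have hJB₀ : J = B₀ ∩ C :=
      hJ.eq_of_subset_indep (hB₀.indep.subset inter_subset_left)
        (subset_inter (subset_union_right.trans hsub) hJ.subset) inter_subset_right
    have hbasis : N.IsBasis (B₀ ∩ C) C := hJB₀ ▸ hJ
    have hkey := hB₀.compl_inter_isBasis_of_inter_isBasis hbasis
    rw [mcon, dual_indep_iff_exists']
    refine ⟨by rwa [hgr, restrict_ground_eq], (N.E \ B₀) ∩ (N.E \ C), ?_, ?_⟩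
    · rw [hgr, isBase_restrict_iff hR]
      exact hkey
    · exact disjoint_left.2 fun x hx hx' =>
        hx'.1.2 (hsub (subset_union_left hx))

/-- Contraction and deletion commute (for disjoint subsets of the ground set). -/
lemma mcon_mdel_comm (hC : C ⊆ N.E) (hD : D ⊆ N.E) (hCD : Disjoint C D) :
    mcon (mdel N D) C = mdel (mcon N C) D := by
  have hCD' : C ⊆ N.E \ D := subset_diff.2 ⟨hC, hCD⟩
  refine ext_indep ?_ fun I hI => ?_
  · rw [mcon_ground, mdel_ground, mdel_ground, mcon_ground, diff_diff_comm]
  rw [mcon_ground, mdel_ground] at hI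
  rw [mcon_indep_iff (show C ⊆ (mdel N D).E from hCD'), mdel_indep_iff,
    mcon_indep_iff hC, mcon_ground]
  constructor
  · rintro ⟨hI1, J, hJ, hIJ⟩
    rw [mdel_ground] at hI1
    rw [mdel, isBasis_restrict_iff diff_subset] at hJ
    rw [mdel_indep_iff] at hIJ
    exact ⟨⟨fun x hx => ⟨(hI1 hx).1.1, (hI1 hx).2⟩, J, hJ.1, hIJ.1⟩,
      diff_diff_comm ▸ hI1⟩
  · rintro ⟨⟨hI1, J, hJ, hIJ⟩, hI2⟩
    refine ⟨?_, J, ?_, ?_⟩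
    · rw [mdel_ground, diff_diff_comm]; exact hI2
    · rw [mdel, isBasis_restrict_iff diff_subset]
      exact ⟨hJ, hCD'⟩
    · rw [mdel_indep_iff]
      refine ⟨hIJ, union_subset ?_ (hJ.subset.trans hCD')⟩
      exact fun x hx => ⟨(hI2 hx).1.1, (hI2 hx).2⟩

lemma eVec_empty : eVec (∅ : Set E) = 0 := by
  funext x; simp [eVec]

lemma eVec_insert {i : E} {s : Set E} (h : i ∉ s) :
    eVec (insert i s) = eVec {i} + eVec s := by
  funext x
  simp only [eVec, Pi.add_apply, Set.indicator_apply]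
  by_cases hx : x = i
  · subst hx; simp [h]
  · by_cases hxs : x ∈ s <;> simp [hx, hxs]

/-- The key consequence of (MF1): contracting a set `s` in `M β` equals
deleting `s` from `M (β + e_s)`. -/
lemma flock_mcon [Fintype E] {d : ℕ} {M : (E → ℤ) → Matroid E}
    (hM : IsMatroidFlock d M) (s : Set E) :
    ∀ β, mcon (M β) s = mdel (M (β + eVec s)) s := by
  refine Set.Finite.induction_on
    (motive := fun s _ => ∀ β, mcon (M β) s = mdel (M (β + eVec s)) s) s
    (Set.toFinite s) (fun β => ?_) ?_
  · rw [mcon_empty, eVec_empty, add_zero, mdel_empty]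
  · intro i t hit _ IH β
    have hg : ∀ γ, (M γ).E = univ := hM.1
    have h1 : mcon (M β) (insert i t) = mcon (mcon (M β) {i}) t := by
      rw [mcon_mcon, singleton_union]
    rw [h1, hM.2.2.1 β i]
    have h2 : mcon (mdel (M (β + eVec {i})) {i}) t
        = mdel (mcon (M (β + eVec {i})) t) {i} := by
      refine mcon_mdel_comm ?_ ?_ ?_
      · rw [hg]; exact subset_univ _
      · rw [hg]; exact subset_univ _
      · exact disjoint_singleton_right.2 hit
    rw [h2, IH (β + eVec {i}), mdel_mdel, union_singleton, eVec_insert hit,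
      ← add_assoc]

/-! ### Rank lemmas -/

lemma bddAbove_rkSet [Fintype E] (M : Matroid E) (X : Set E) :
    BddAbove {n | ∃ I, I ⊆ X ∧ M.Indep I ∧ I.ncard = n} := by
  refine ⟨Fintype.card E, ?_⟩
  rintro n ⟨I, -, -, rfl⟩
  simpa [ncard_univ] using ncard_le_ncard (subset_univ I) (toFinite _)

lemma rkSet_nonempty (M : Matroid E) (X : Set E) :
    {n | ∃ I, I ⊆ X ∧ M.Indep I ∧ I.ncard = n}.Nonempty :=
  ⟨0, ∅, empty_subset _, M.empty_indep, ncard_empty _⟩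

lemma ncard_le_rk [Fintype E] {M : Matroid E} {I X : Set E}
    (hI : M.Indep I) (hIX : I ⊆ X) : I.ncard ≤ rk M X :=
  le_csSup (bddAbove_rkSet M X) ⟨I, hIX, hI, rfl⟩

lemma exists_rk_attained [Fintype E] (M : Matroid E) (X : Set E) :
    ∃ I, I ⊆ X ∧ M.Indep I ∧ I.ncard = rk M X :=
  Nat.sSup_mem (rkSet_nonempty M X) (bddAbove_rkSet M X)

lemma rk_eq_ncard_of_basis [Fintype E] {M : Matroid E} {B X : Set E}
    (hX : X ⊆ M.E) (hB : M.IsBasis B X) : rk M X = B.ncard := by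
  refine le_antisymm (csSup_le (rkSet_nonempty M X) ?_) (ncard_le_rk hB.indep hB.subset)
  rintro n ⟨I, hIX, hI, rfl⟩
  obtain ⟨B', hB', hIB'⟩ := hI.subset_isBasis_of_subset hIX hX
  have hcard : B'.ncard = B.ncard := by
    rw [ncard_def, hB'.encard_eq_encard hB, ← ncard_def]
  exact (ncard_le_ncard hIB' (toFinite _)).trans hcard.le

end Aux

/-- **Lemma.** Let `M : α ↦ M_α` be a matroid flock on `E`, let `α ∈ ℤ^E` and `J ⊆ E`.
If `M_α = M_{α+e_J}`, then `λ_{M_α}(J) = 0`, where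
`λ_N(J) = r_N(J) + r_N(E \ J) − r_N(E)` is the connectivity function. -/
theorem flock_step_connectivity_zero [Fintype E] (d : ℕ) (M : (E → ℤ) → Matroid E)
    (hM : IsMatroidFlock d M) (α : E → ℤ) (J : Set E)
    (h : M α = M (α + eVec J)) :
    (rk (M α) J : ℤ) + (rk (M α) Jᶜ : ℤ) - (rk (M α) Set.univ : ℤ) = 0 := by
  set N := M α with hN
  have hE : N.E = univ := hM.1 α
  set K : Set E := univ \ J with hK
  have hJK : Jᶜ = K := compl_eq_univ_diff J
  -- the matroid identity `mcon N J = mdel N J`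
  have hid : mcon N J = mdel N J := by
    rw [flock_mcon hM J α, ← h]
  -- dualized: `mdel N✶ J = (mdel N J)✶`
  have hdual : mdel N✶ J = (mdel N J)✶ := by
    calc mdel N✶ J = (mdel N✶ J)✶✶ := (dual_dual _).symm
      _ = (mcon N J)✶ := rfl
      _ = (mdel N J)✶ := by rw [hid]
  have hKE : K ⊆ N.E := by rw [hE]; exact diff_subset
  have hJE : J ⊆ N.E := by rw [hE]; exact subset_univ _
  have hNEJ : N.E \ J = K := by rw [hE]
  -- rank of the ground set equals the size of any base
  have hrk_base : ∀ B : Set E, N.IsBase B → rk N univ = B.ncard := by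
    intro B hB
    have := hB.isBasis_ground
    rw [hE] at this
    exact rk_eq_ncard_of_basis (by rw [hE]) this
  -- direction 1 : rk univ ≤ rk J + rk K
  obtain ⟨B₀, hB₀⟩ := N.exists_isBase
  have hdir1 : rk N univ ≤ rk N J + rk N K := by
    have hsplit : B₀ = (B₀ ∩ J) ∪ (B₀ ∩ K) := by
      rw [← inter_union_distrib_left]
      rw [hK, union_diff_self, union_univ, inter_univ]
    have hdisj : Disjoint (B₀ ∩ J) (B₀ ∩ K) :=
      Disjoint.mono inter_subset_right inter_subset_right disjoint_sdiff_right
    have hcard : B₀.ncard = (B₀ ∩ J).ncard + (B₀ ∩ K).ncard := by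
      conv_lhs => rw [hsplit]
      exact ncard_union_eq hdisj (toFinite _) (toFinite _)
    rw [hrk_base B₀ hB₀, hcard]
    exact add_le_add (ncard_le_rk (hB₀.indep.subset inter_subset_left) inter_subset_right)
      (ncard_le_rk (hB₀.indep.subset inter_subset_left) inter_subset_right)
  -- direction 2 : rk J + rk K ≤ rk univ
  have hdir2 : rk N J + rk N K ≤ rk N univ := by
    obtain ⟨I, hIJ, hI, hIcard⟩ := exists_rk_attained N J
    obtain ⟨B₁, hB₁, hIB₁⟩ := hI.exists_isBase_superset
    have hBd : N✶.IsBase (univ \ B₁) := by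
      have := hB₁.compl_isBase_dual
      rwa [hE] at this
    have hind : (mdel N✶ J).Indep ((univ \ B₁) ∩ K) := by
      rw [mdel_indep_iff]
      refine ⟨hBd.indep.subset inter_subset_left, ?_⟩
      rw [dual_ground, hNEJ]
      exact inter_subset_right
    rw [hdual, dual_indep_iff_exists'] at hind
    obtain ⟨-, B₂, hB₂, hdisj⟩ := hind
    have hB₂' : N.IsBasis B₂ K := by
      rw [mdel, isBase_restrict_iff diff_subset, hNEJ] at hB₂
      exact hB₂
    have hrkK : rk N K = B₂.ncard := rk_eq_ncard_of_basis hKE hB₂'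
    have hB₂B₁ : B₂ ⊆ B₁ := by
      intro x hx
      by_contra hxB₁
      exact disjoint_left.1 hdisj ⟨⟨mem_univ x, hxB₁⟩, hB₂'.subset hx⟩ hx
    have hdisjIB₂ : Disjoint I B₂ :=
      Disjoint.mono hIJ hB₂'.subset disjoint_sdiff_right
    calc rk N J + rk N K = I.ncard + B₂.ncard := by rw [hIcard, hrkK]
      _ = (I ∪ B₂).ncard := (ncard_union_eq hdisjIB₂ (toFinite _) (toFinite _)).symm
      _ ≤ B₁.ncard := ncard_le_ncard (union_subset hIB₁ hB₂B₁) (toFinite _)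
      _ = rk N univ := (hrk_base B₁ hB₁).symm
  rw [hJK]
  omega

end FrobFlock
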